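/- Let R be a complete, reduced, cyclically complete rewriting system for M. If u and v are transposed in M (u =_M xy, v =_M yx for some words x, y), then the cyclically irreducible forms ρ(u) and ρ(v) are cyclic conjugates in Σ*. -/

import Mathlib

/-- `u` and `v` are cyclic conjugates in the free monoid `Σ*`. -/
def CycConj {α : Type*} (u v : List α) : Prop :=
  ∃ x y : List α, u = x ++ y ∧ v = y ++ x

/-- One rewriting step of the rewriting system `R`. -/
def Step {α : Type*} (R : List α → List α → Prop) (u v : List α) : Prop :=
  ∃ l r x y : List α, R l r ∧ u = x ++ l ++ y ∧ v = x ++ r ++ y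

/-- One cyclic reduction step: some cyclic conjugate of `u` rewrites to `v`. -/
def CycStep {α : Type*} (R : List α → List α → Prop) (u v : List α) : Prop :=
  ∃ w : List α, CycConj u w ∧ Step R w v

/-- `u` is cyclically irreducible: `u` and all its cyclic conjugates are irreducible. -/
def CycIrred {α : Type*} (R : List α → List α → Prop) (u : List α) : Prop :=
  ∀ w : List α, CycConj u w → ∀ v : List α, ¬ Step R w v

/-- Equality in the monoid presented by the rewriting system `R`. -/
def MEq {α : Type*} (R : List α → List α → Prop) : List α → List α → Prop :=
  Relation.EqvGen (Step R)

/-- `u ≡_M v` : `u` and `v` are left and right conjugates in the monoid presented by `R`. -/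
def MConj {α : Type*} (R : List α → List α → Prop) (u v : List α) : Prop :=
  ∃ x y : List α, MEq R (u ++ x) (x ++ v) ∧ MEq R (y ++ u) (v ++ y)

/-- `R` is reduced: right-hand sides are irreducible and no left-hand side
properly contains another left-hand side. -/
def Reduced {α : Type*} (R : List α → List α → Prop) : Prop :=
  ∀ l r : List α, R l r → (∀ v : List α, ¬ Step R r v) ∧
    ∀ l' r' x y : List α, R l' r' → l = x ++ l' ++ y → x = [] ∧ y = []


lemma cycConj_refl {α : Type*} (u : List α) : CycConj u u :=
  ⟨u, [], by simp, by simp⟩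

lemma cycConj_symm {α : Type*} {u v : List α} (h : CycConj u v) : CycConj v u := by
  obtain ⟨x, y, h1, h2⟩ := h; exact ⟨y, x, h2, h1⟩

lemma cycConj_trans {α : Type*} {u v w : List α} (h1 : CycConj u v) (h2 : CycConj v w) :
    CycConj u w := by
  obtain ⟨x, y, hu, hv⟩ := h1
  obtain ⟨x', y', hv', hw⟩ := h2
  rw [hv] at hv'
  rcases List.append_eq_append_iff.mp hv' with ⟨a, hx', hx⟩ | ⟨c, hy, hy'⟩
  · exact ⟨a, y' ++ y, by simp [hu, hx], by simp [hw, hx']⟩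
  · exact ⟨x ++ x', c, by simp [hu, hy], by simp [hw, hy']⟩

lemma step_cycStep {α : Type*} {R : List α → List α → Prop} {u v : List α}
    (h : Step R u v) : CycStep R u v :=
  ⟨u, cycConj_refl u, h⟩

lemma rtg_step_cycStep {α : Type*} {R : List α → List α → Prop} {u v : List α}
    (h : Relation.ReflTransGen (Step R) u v) :
    Relation.ReflTransGen (CycStep R) u v :=
  Relation.ReflTransGen.mono (fun a b (h : Step R a b) => step_cycStep h) u v h

/-- Church–Rosser: equality in `M` implies a common `Step`-reduct, given confluence. -/
lemma meq_join {α : Type*} {R : List α → List α → Prop}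
    (hconfS : ∀ w u v : List α, Relation.ReflTransGen (Step R) w u →
      Relation.ReflTransGen (Step R) w v →
      ∃ z : List α, Relation.ReflTransGen (Step R) u z ∧
        Relation.ReflTransGen (Step R) v z)
    {u v : List α} (h : MEq R u v) :
    ∃ z : List α, Relation.ReflTransGen (Step R) u z ∧
      Relation.ReflTransGen (Step R) v z := by
  induction h with
  | rel a b hab => exact ⟨b, Relation.ReflTransGen.single hab, Relation.ReflTransGen.refl⟩
  | refl a => exact ⟨a, Relation.ReflTransGen.refl, Relation.ReflTransGen.refl⟩
  | symm a b _ ih => obtain ⟨z, h1, h2⟩ := ih; exact ⟨z, h2, h1⟩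
  | trans a b c _ _ ih1 ih2 =>
      obtain ⟨z1, ha1, hb1⟩ := ih1
      obtain ⟨z2, hb2, hc2⟩ := ih2
      obtain ⟨z, hz1, hz2⟩ := hconfS b z1 z2 hb1 hb2
      exact ⟨z, ha1.trans hz1, hc2.trans hz2⟩

/-- Cyclic irreducibility is invariant under cyclic conjugacy. -/
lemma cycIrred_of_cycConj {α : Type*} {R : List α → List α → Prop} {p q : List α}
    (hp : CycIrred R p) (h : CycConj p q) : CycIrred R q :=
  fun w hw v hv => hp w (cycConj_trans h hw) v hv

/-- A cyclically irreducible word admits no nontrivial cyclic reduction. -/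
lemma cycIrred_terminal {α : Type*} {R : List α → List α → Prop} {p c : List α}
    (hp : CycIrred R p) (h : Relation.ReflTransGen (CycStep R) p c) : c = p := by
  rcases Relation.ReflTransGen.cases_head h with rfl | ⟨b, hb, _⟩
  · rfl
  · obtain ⟨w, hw, hstep⟩ := hb
    exact absurd hstep (hp w hw b)

/-- Reductions transfer along cyclic conjugacy (up to a trivial case). -/
lemma rtg_of_cycConj {α : Type*} {R : List α → List α → Prop} {p q c : List α}
    (hconj : CycConj q p) (h : Relation.ReflTransGen (CycStep R) p c) :
    Relation.ReflTransGen (CycStep R) q c ∨ CycConj q c := by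
  rcases Relation.ReflTransGen.cases_head h with rfl | ⟨b, hb, hbc⟩
  · exact Or.inr hconj
  · obtain ⟨w, hw, hv⟩ := hb
    exact Or.inl ((Relation.ReflTransGen.single ⟨w, cycConj_trans hconj hw, hv⟩).trans hbc)

/-- for a complete, reduced, cyclically complete rewriting system,
transposed words have cyclically conjugate cyclically irreducible forms. -/
theorem conj_forms_of_transposed {α : Type*} (R : List α → List α → Prop)
    (htermS : ¬ ∃ g : ℕ → List α, ∀ n : ℕ, Step R (g n) (g (n + 1)))
    (hconfS : ∀ w u v : List α, Relation.ReflTransGen (Step R) w u →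
      Relation.ReflTransGen (Step R) w v →
      ∃ z : List α, Relation.ReflTransGen (Step R) u z ∧
        Relation.ReflTransGen (Step R) v z)
    (hred : Reduced R)
    (htermC : ¬ ∃ g : ℕ → List α, ∀ n : ℕ, CycStep R (g n) (g (n + 1)))
    (hconfC : ∀ w u v : List α, Relation.ReflTransGen (CycStep R) w u →
      Relation.ReflTransGen (CycStep R) w v →
      ∃ z z' : List α, CycConj z z' ∧ Relation.ReflTransGen (CycStep R) u z ∧
        Relation.ReflTransGen (CycStep R) v z')
    (u v ru rv : List α)
    (htrans : ∃ x y : List α, MEq R u (x ++ y) ∧ MEq R v (y ++ x))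
    (hru : Relation.ReflTransGen (CycStep R) u ru) (hiru : CycIrred R ru)
    (hrv : Relation.ReflTransGen (CycStep R) v rv) (hirv : CycIrred R rv) :
    CycConj ru rv := by
  obtain ⟨x, y, hux, hvy⟩ := htrans
  -- common Step-reducts
  obtain ⟨z1, huz1, hxyz1⟩ := meq_join hconfS hux
  obtain ⟨z2, hvz2, hyxz2⟩ := meq_join hconfS hvy
  -- cyclic confluence at u : ru vs z1
  obtain ⟨a, a', haa', hrua, hz1a'⟩ := hconfC u ru z1 hru (rtg_step_cycStep huz1)
  have ha : a = ru := cycIrred_terminal hiru hrua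
  subst ha
  have hirua' : CycIrred R a' := cycIrred_of_cycConj hiru haa'
  -- cyclic confluence at v : rv vs z2
  obtain ⟨b, b', hbb', hrvb, hz2b'⟩ := hconfC v rv z2 hrv (rtg_step_cycStep hvz2)
  have hb : b = rv := cycIrred_terminal hirv hrvb
  subst hb
  have hirvb' : CycIrred R b' := cycIrred_of_cycConj hirv hbb'
  -- x++y →*C a',  y++x →*C b'
  have hxya' : Relation.ReflTransGen (CycStep R) (x ++ y) a' :=
    (rtg_step_cycStep hxyz1).trans hz1a'
  have hyxb' : Relation.ReflTransGen (CycStep R) (y ++ x) b' :=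
    (rtg_step_cycStep hyxz2).trans hz2b'
  have hconj : CycConj (y ++ x) (x ++ y) := ⟨y, x, rfl, rfl⟩
  have ha'b' : CycConj a' b' := by
    rcases rtg_of_cycConj hconj hxya' with hyxa' | hc
    · obtain ⟨c, c', hcc', ha'c, hb'c'⟩ := hconfC (y ++ x) a' b' hyxa' hyxb'
      rw [cycIrred_terminal hirua' ha'c, cycIrred_terminal hirvb' hb'c'] at hcc'
      exact hcc'
    · have : CycIrred R (y ++ x) := cycIrred_of_cycConj hirua' (cycConj_symm hc)
      rw [cycIrred_terminal this hyxb']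
      exact cycConj_symm hc
  exact cycConj_trans haa' (cycConj_trans ha'b' (cycConj_symm hbb'))
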